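/- Let C₁ > 0 and C₂ ∈ ℝ, and define on t > 0 the functions a(t) = C₁^{1/3}·(24π)^{1/6}·t^{1/3} and Φ(t) = C₂ + (1/√(24π))·ln t. Then for all t > 0: (i) 3·(a'(t)/a(t))² = 8π·Φ'(t)², and (ii) a(t)³·Φ'(t) = C₁. -/

import Mathlib

open Real

/-- The correct slow-rolling solution: `a(t) = C₁^{1/3}(24π)^{1/6} t^{1/3}`,
`Φ(t) = C₂ + ln t/√(24π)` satisfies the slow-rolling Einstein equation and has
first integral `a³Φ' = C₁` for `t > 0`. -/
theorem stiff_solution_slow_rolling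
    (C₁ C₂ : ℝ) (hC₁ : C₁ > 0)
    (a Φ : ℝ → ℝ)
    (ha : ∀ t : ℝ, a t = C₁ ^ ((1 : ℝ) / 3) * (24 * Real.pi) ^ ((1 : ℝ) / 6) * t ^ ((1 : ℝ) / 3))
    (hΦ : ∀ t : ℝ, Φ t = C₂ + (1 / Real.sqrt (24 * Real.pi)) * Real.log t) :
    ∀ t : ℝ, t > 0 →
      (3 * (deriv a t / a t) ^ 2 = 8 * Real.pi * (deriv Φ t) ^ 2 ∧
       (a t) ^ 3 * deriv Φ t = C₁) := by
  intro t ht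
  have hpi : (0:ℝ) < 24 * Real.pi := by positivity
  set K : ℝ := C₁ ^ ((1:ℝ)/3) * (24 * Real.pi) ^ ((1:ℝ)/6) with hK
  have hKpos : 0 < K := by positivity
  have haf : a = fun t : ℝ => K * t ^ ((1:ℝ)/3) := funext ha
  have hΦf : Φ = fun t : ℝ => C₂ + (1 / Real.sqrt (24 * Real.pi)) * Real.log t :=
    funext hΦ
  have hda : deriv a t = K * ((1:ℝ)/3 * t ^ ((1:ℝ)/3 - 1)) := by
    rw [haf]
    exact ((Real.hasDerivAt_rpow_const (Or.inl ht.ne')).const_mul K).deriv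
  have hdΦ : deriv Φ t = (1 / Real.sqrt (24 * Real.pi)) * t⁻¹ := by
    rw [hΦf]
    have h1 : HasDerivAt (fun t : ℝ => C₂ + (1 / Real.sqrt (24 * Real.pi)) * Real.log t)
        (0 + (1 / Real.sqrt (24 * Real.pi)) * t⁻¹) t :=
      (hasDerivAt_const t C₂).add ((Real.hasDerivAt_log ht.ne').const_mul _)
    simpa using h1.deriv
  have hs : Real.sqrt (24 * Real.pi) > 0 := Real.sqrt_pos.mpr hpi
  have hs2 : Real.sqrt (24 * Real.pi) ^ 2 = 24 * Real.pi := Real.sq_sqrt hpi.le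
  have htr : t ^ ((1:ℝ)/3) > 0 := Real.rpow_pos_of_pos ht _
  constructor
  · rw [hda, hdΦ, ha t]
    have hsub : t ^ ((1:ℝ)/3 - 1) = t ^ ((1:ℝ)/3) * t⁻¹ := by
      rw [Real.rpow_sub ht, Real.rpow_one]
      ring
    rw [hsub]
    field_simp
    ring_nf
    rw [Real.sq_sqrt (by positivity : (0:ℝ) ≤ Real.pi * 24)]
  · rw [hdΦ, ha t]
    have h1 : (C₁ ^ ((1:ℝ)/3)) ^ (3:ℕ) = C₁ := by
      rw [← Real.rpow_natCast (C₁ ^ ((1:ℝ)/3)) 3, ← Real.rpow_mul hC₁.le]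
      norm_num
    have h2 : ((24 * Real.pi) ^ ((1:ℝ)/6)) ^ (3:ℕ) = Real.sqrt (24 * Real.pi) := by
      rw [← Real.rpow_natCast _ 3, ← Real.rpow_mul hpi.le, Real.sqrt_eq_rpow]
      norm_num
    have h3 : (t ^ ((1:ℝ)/3)) ^ (3:ℕ) = t := by
      rw [← Real.rpow_natCast _ 3, ← Real.rpow_mul ht.le]
      norm_num
    rw [mul_pow, mul_pow, h1, h2, h3]
    field_simp
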